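/- Under the preconditioner setup: λ_max( P̂^{-1/2} (A + μI) P̂^{-1/2} ) ≥ λ̂_k + μ − ‖ℰ‖₂. -/

import Mathlib

open Matrix

/-- The spectral norm (largest singular value) of a real matrix,
as the `ℓ²→ℓ²` operator norm. -/
noncomputable def matSpectralNorm {m n : ℕ} (M : Matrix (Fin m) (Fin n) ℝ) : ℝ :=
  ‖LinearMap.toContinuousLinearMap (Matrix.toEuclideanLin M)‖

/-- The square root of a positive semidefinite matrix, as defined in Mathlib (December 2024). -/
noncomputable def Matrix.PosSemidef.sqrt {n 𝕜 : Type*} [Fintype n] [RCLike 𝕜] [PartialOrder 𝕜] [StarOrderedRing 𝕜] [DecidableEq n]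
    {A : Matrix n n 𝕜} (hA : A.PosSemidef) : Matrix n n 𝕜 :=
  hA.1.eigenvectorUnitary.1 * diagonal ((↑) ∘ (√·) ∘ hA.1.eigenvalues) *
    (star hA.1.eigenvectorUnitary : Matrix n n 𝕜)

/-- The largest eigenvalue of a real symmetric matrix, as the supremum of the
Rayleigh quotient over the unit sphere. -/
noncomputable def lmax {n : ℕ} (M : Matrix (Fin n) (Fin n) ℝ) : ℝ :=
  ⨆ x : Metric.sphere (0 : EuclideanSpace ℝ (Fin n)) 1,
    (inner ℝ (x : EuclideanSpace ℝ (Fin n))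
      (Matrix.toEuclideanLin M (x : EuclideanSpace ℝ (Fin n))) : ℝ)

/-- The smallest eigenvalue of a real symmetric matrix, as the infimum of the
Rayleigh quotient over the unit sphere. -/
noncomputable def lmin {n : ℕ} (M : Matrix (Fin n) (Fin n) ℝ) : ℝ :=
  ⨅ x : Metric.sphere (0 : EuclideanSpace ℝ (Fin n)) 1,
    (inner ℝ (x : EuclideanSpace ℝ (Fin n))
      (Matrix.toEuclideanLin M (x : EuclideanSpace ℝ (Fin n))) : ℝ)

lemma Matrix.PosSemidef.posSemidef_sqrt {n : Type*} [Fintype n]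
    [DecidableEq n] {A : Matrix n n ℝ} (hA : A.PosSemidef) :
    hA.sqrt.PosSemidef := by
  unfold Matrix.PosSemidef.sqrt
  rw [star_eq_conjTranspose]
  apply PosSemidef.mul_mul_conjTranspose_same
  refine posSemidef_diagonal_iff.mpr fun i => ?_
  simp only [Function.comp_apply]
  exact Real.sqrt_nonneg _

lemma Matrix.PosSemidef.sqrt_mul_self {n : Type*} [Fintype n]
    [DecidableEq n] {A : Matrix n n ℝ} (hA : A.PosSemidef) :
    hA.sqrt * hA.sqrt = A := by
  unfold Matrix.PosSemidef.sqrt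
  set C : Matrix n n ℝ := hA.1.eigenvectorUnitary.1 with hC
  set D := diagonal ((↑) ∘ (√·) ∘ hA.1.eigenvalues : n → ℝ) with hD
  have h1 : star C * C = 1 := by simp [C]
  have h2 : D * D = diagonal (RCLike.ofReal ∘ hA.1.eigenvalues) := by
    rw [hD, diagonal_mul_diagonal]
    congr 1
    funext v
    simp only [Function.comp_apply]
    rw [Real.mul_self_sqrt (hA.eigenvalues_nonneg v)]; rfl
  calc C * D * star C * (C * D * star C) = C * (D * (star C * C) * D) * star C := by
        simp only [mul_assoc]
    _ = A := by
        rw [h1, mul_one, h2]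
        exact hA.1.spectral_theorem.symm

lemma inner_toEuclideanLin_eq {n : ℕ} (M : Matrix (Fin n) (Fin n) ℝ) (v : Fin n → ℝ) :
    (inner ℝ ((WithLp.equiv 2 _).symm v : EuclideanSpace ℝ (Fin n))
      (Matrix.toEuclideanLin M ((WithLp.equiv 2 _).symm v)) : ℝ) = v ⬝ᵥ (M *ᵥ v) := by
  simp only [PiLp.inner_apply, RCLike.inner_apply, conj_trivial,
    WithLp.equiv_symm_apply, PiLp.toLp_apply, dotProduct]
  exact Finset.sum_congr rfl fun i _ => by rw [mul_comm]; rfl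

lemma norm_symm_eq_one {n : ℕ} (v : Fin n → ℝ) (h : v ⬝ᵥ v = 1) :
    ‖((WithLp.equiv 2 _).symm v : EuclideanSpace ℝ (Fin n))‖ = 1 := by
  rw [EuclideanSpace.norm_eq]
  simp only [WithLp.equiv_symm_apply, PiLp.toLp_apply, Real.norm_eq_abs, sq_abs]
  rw [show ∑ i, v i ^ 2 = v ⬝ᵥ v by simp [dotProduct, sq], h, Real.sqrt_one]

lemma rayleigh_le_opNorm {n : ℕ} (M : Matrix (Fin n) (Fin n) ℝ)
    (y : EuclideanSpace ℝ (Fin n)) (hy : ‖y‖ = 1) :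
    |(inner ℝ y (Matrix.toEuclideanLin M y) : ℝ)| ≤ matSpectralNorm M := by
  set T := LinearMap.toContinuousLinearMap (Matrix.toEuclideanLin M) with hT
  have h1 : Matrix.toEuclideanLin M y = T y := rfl
  rw [h1]
  calc |(inner ℝ y (T y) : ℝ)| ≤ ‖y‖ * ‖T y‖ := abs_real_inner_le_norm _ _
    _ ≤ ‖y‖ * (‖T‖ * ‖y‖) := by gcongr; exact T.le_opNorm y
    _ = ‖T‖ := by rw [hy]; ring

/-- Preconditioner setup: `n > k ≥ 1`, `A` real symmetric with `A + μI` positive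
definite (`μ ≥ 0`), `Û` with orthonormal columns (`ÛᵀÛ = I`),
`Θ̂ = diag(λ̂_1,…,λ̂_k)` with `λ̂_1 ≥ … ≥ λ̂_k > 0`, `Â_N = Û Θ̂ Ûᵀ`,
`A = Â_N + E + ℰ` with `E, ℰ` symmetric and `E` positive semidefinite, and
`P̂⁻¹ = I − ÛÛᵀ + (λ̂_k + μ) Û (Θ̂ + μI)⁻¹ Ûᵀ`, which is symmetric positive definite;
`P̂^{-1/2}` is its positive semidefinite square root.
Then `λ_max(P̂^{-1/2}(A + μI)P̂^{-1/2}) ≥ λ̂_k + μ − ‖ℰ‖₂`. -/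
theorem stmt18 {n k : ℕ} (hk : 1 ≤ k) (hkn : k < n)
    (A : Matrix (Fin n) (Fin n) ℝ) (hA : A.IsHermitian)
    (μ : ℝ) (hμ : 0 ≤ μ) (hAμ : (A + μ • 1).PosDef)
    (U : Matrix (Fin n) (Fin k) ℝ) (hU : Uᵀ * U = 1)
    (lamh : Fin k → ℝ) (hlamh : Antitone lamh) (hlamhk : 0 < lamh ⟨k - 1, by omega⟩)
    (E Err : Matrix (Fin n) (Fin n) ℝ) (hE : E.IsHermitian) (hErr : Err.IsHermitian)
    (hEpsd : E.PosSemidef)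
    (hsum : A = U * Matrix.diagonal lamh * Uᵀ + E + Err)
    (hPinvPD : ((1 : Matrix (Fin n) (Fin n) ℝ) - U * Uᵀ +
      (lamh ⟨k - 1, by omega⟩ + μ) • (U * (Matrix.diagonal lamh + μ • 1)⁻¹ * Uᵀ)).PosDef)
     :
    let S := hPinvPD.posSemidef.sqrt
    let M := S * (A + μ • 1) * S
    lamh ⟨k - 1, by omega⟩ + μ - matSpectralNorm Err ≤ lmax M := by
  intro S M
  set j : Fin k := ⟨k - 1, by omega⟩ with hj
  set c : ℝ := lamh j + μ with hc
  have hcpos : 0 < c := by positivity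
  set e : Fin k → ℝ := Pi.single j 1 with he
  set v : Fin n → ℝ := U *ᵥ e with hv
  have hUtv : Uᵀ *ᵥ v = e := by
    rw [hv, mulVec_mulVec, hU, one_mulVec]
  have hdotU : ∀ x : Fin n → ℝ, v ⬝ᵥ x = e ⬝ᵥ (Uᵀ *ᵥ x) := by
    intro x
    rw [hv, dotProduct_comm, dotProduct_mulVec, dotProduct_comm, ← mulVec_transpose]
  have hvv : v ⬝ᵥ v = 1 := by
    rw [hdotU, hUtv, he, single_dotProduct, one_mul, Pi.single_eq_same]
  have hDpos : ∀ i, lamh i + μ ≠ 0 := by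
    intro i
    have h1 : lamh j ≤ lamh i := hlamh (by rw [Fin.le_def]; simp only [hj]; omega)
    have : 0 < lamh i + μ := by linarith
    exact ne_of_gt this
  have hDmul : (diagonal lamh + μ • (1 : Matrix (Fin k) (Fin k) ℝ)) *
      diagonal (fun i => (lamh i + μ)⁻¹) = 1 := by
    rw [smul_one_eq_diagonal, diagonal_add, diagonal_mul_diagonal,
      show (fun i => (lamh i + μ) * (lamh i + μ)⁻¹) = fun _ => (1 : ℝ) from
        funext fun i => mul_inv_cancel₀ (hDpos i), diagonal_one]
  have hDinv := inv_eq_right_inv hDmul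
  -- P̂⁻¹ fixes v
  have hPv : ((1 : Matrix (Fin n) (Fin n) ℝ) - U * Uᵀ +
      c • (U * (diagonal lamh + μ • 1)⁻¹ * Uᵀ)) *ᵥ v = v := by
    rw [hDinv]
    have h1 : (U * Uᵀ) *ᵥ v = v := by rw [← mulVec_mulVec, hUtv, ← hv]
    have h2 : (U * diagonal (fun i => (lamh i + μ)⁻¹) * Uᵀ) *ᵥ v = c⁻¹ • v := by
      rw [← mulVec_mulVec, hUtv, ← mulVec_mulVec, he, diagonal_mulVec_single, mul_one]
      have hsingle : Pi.single j ((lamh j + μ)⁻¹) = c⁻¹ • e := by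
        rw [he, hc]
        ext i
        by_cases h : i = j <;> simp [h, Pi.single_apply]
      rw [hsingle, mulVec_smul, ← hv]
    rw [add_mulVec, sub_mulVec, one_mulVec, smul_mulVec, h1, h2, smul_smul,
      mul_inv_cancel₀ (ne_of_gt hcpos), one_smul, sub_self, zero_add]
  have hS2 : S * S = _ := hPinvPD.posSemidef.sqrt_mul_self
  have hSps : S.PosSemidef := hPinvPD.posSemidef.posSemidef_sqrt
  -- S fixes v
  have hkill : (S + 1) *ᵥ (S *ᵥ v - v) = 0 := by
    rw [mulVec_sub, add_mulVec, add_mulVec, one_mulVec, one_mulVec, mulVec_mulVec, hS2, hPv]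
    abel
  have hSv : S *ᵥ v = v := by
    by_contra h
    have hne : S *ᵥ v - v ≠ 0 := sub_ne_zero.mpr h
    have hpd : (S + 1).PosDef := Matrix.PosDef.posSemidef_add hSps Matrix.PosDef.one
    have := hpd.dotProduct_mulVec_pos hne
    rw [hkill, dotProduct_zero] at this
    exact lt_irrefl 0 this
  have hSsym : Sᵀ = S := by
    have h : Sᴴ = S := hSps.1
    rwa [conjTranspose_eq_transpose_of_trivial] at h
  have hSdot : ∀ x, v ⬝ᵥ (S *ᵥ x) = v ⬝ᵥ x := by
    intro x
    rw [dotProduct_mulVec]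
    have hvS : v ᵥ* S = v := by
      conv_lhs => rw [← hSsym]
      rw [vecMul_transpose, hSv]
    rw [hvS]
  -- value of the Rayleigh quotient at v
  have hAN : v ⬝ᵥ ((U * diagonal lamh * Uᵀ) *ᵥ v) = lamh j := by
    rw [← mulVec_mulVec, hUtv, ← mulVec_mulVec, he, diagonal_mulVec_single, mul_one,
      hdotU, mulVec_mulVec, hU, one_mulVec, he, single_dotProduct, one_mul, Pi.single_eq_same]
  have hMv : v ⬝ᵥ (M *ᵥ v) = lamh j + μ + v ⬝ᵥ (E *ᵥ v) + v ⬝ᵥ (Err *ᵥ v) := by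
    show v ⬝ᵥ ((S * (A + μ • 1) * S) *ᵥ v) = _
    rw [← mulVec_mulVec, hSv, ← mulVec_mulVec, hSdot, hsum]
    rw [add_mulVec, add_mulVec, add_mulVec, smul_mulVec, one_mulVec,
      dotProduct_add, dotProduct_add, dotProduct_add, dotProduct_smul, hvv, hAN]
    simp only [smul_eq_mul, mul_one]
    ring
  have hEv : 0 ≤ v ⬝ᵥ (E *ᵥ v) := by
    have h := hEpsd.dotProduct_mulVec_nonneg v
    rwa [star_trivial] at h
  -- Euclidean vector
  set x : EuclideanSpace ℝ (Fin n) := (WithLp.equiv 2 _).symm v with hx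
  have hx1 : ‖x‖ = 1 := norm_symm_eq_one v hvv
  have hErrB : -(matSpectralNorm Err) ≤ v ⬝ᵥ (Err *ᵥ v) := by
    rw [← inner_toEuclideanLin_eq, ← hx]
    have h := rayleigh_le_opNorm Err x hx1
    have := neg_abs_le (inner ℝ x (Matrix.toEuclideanLin Err x) : ℝ)
    linarith
  have hmem : x ∈ Metric.sphere (0 : EuclideanSpace ℝ (Fin n)) 1 := by
    rw [mem_sphere_zero_iff_norm]; exact hx1
  have hbdd : BddAbove (Set.range fun y : Metric.sphere (0 : EuclideanSpace ℝ (Fin n)) 1 =>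
      (inner ℝ (y : EuclideanSpace ℝ (Fin n))
        (Matrix.toEuclideanLin M (y : EuclideanSpace ℝ (Fin n))) : ℝ)) := by
    refine ⟨matSpectralNorm M, ?_⟩
    rintro r ⟨⟨y, hy⟩, rfl⟩
    rw [mem_sphere_zero_iff_norm] at hy
    have h := rayleigh_le_opNorm M y hy
    exact le_trans (le_abs_self _) h
  have hle := le_ciSup hbdd (⟨x, hmem⟩ : Metric.sphere (0 : EuclideanSpace ℝ (Fin n)) 1)
  have hxval : (inner ℝ (x : EuclideanSpace ℝ (Fin n)) (Matrix.toEuclideanLin M x) : ℝ)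
      = v ⬝ᵥ (M *ᵥ v) := by rw [hx]; exact inner_toEuclideanLin_eq M v
  rw [lmax] at *
  rw [hxval, hMv] at hle
  linarith
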